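/- Let G be the group presented by ⟨a, b, c | [a,[b⁻¹,c]], [b,[c⁻¹,a]]⟩ (the fundamental group of the Borromean rings link complement), let p : G → F(α, β) be the homomorphism to the free group on two generators determined by p(a) = α, p(b) = β, p(c) = 1, and let B = p⁻¹(⟨β⟩). Then B is not a free group: there is no type ι for which B is isomorphic as a group to the free group on ι. -/

import Mathlib

/-- The discrete Heisenberg group. -/
@[ext]
structure Heis where
  x : ℤ
  y : ℤ
  z : ℤ

namespace Heis

instance : Mul Heis := ⟨fun a b => ⟨a.x + b.x, a.y + b.y, a.z + b.z + a.x * b.y⟩⟩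
instance : One Heis := ⟨⟨0, 0, 0⟩⟩
instance : Inv Heis := ⟨fun a => ⟨-a.x, -a.y, -a.z + a.x * a.y⟩⟩

@[simp] lemma mul_x (a b : Heis) : (a * b).x = a.x + b.x := rfl
@[simp] lemma mul_y (a b : Heis) : (a * b).y = a.y + b.y := rfl
@[simp] lemma mul_z (a b : Heis) : (a * b).z = a.z + b.z + a.x * b.y := rfl
@[simp] lemma one_x : (1 : Heis).x = 0 := rfl
@[simp] lemma one_y : (1 : Heis).y = 0 := rfl
@[simp] lemma one_z : (1 : Heis).z = 0 := rfl
@[simp] lemma inv_x (a : Heis) : a⁻¹.x = -a.x := rfl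
@[simp] lemma inv_y (a : Heis) : a⁻¹.y = -a.y := rfl
@[simp] lemma inv_z (a : Heis) : a⁻¹.z = -a.z + a.x * a.y := rfl

instance : Group Heis where
  mul_assoc a b c := by ext <;> simp <;> ring
  one_mul a := by ext <;> simp
  mul_one a := by ext <;> simp
  inv_mul_cancel a := by ext <;> simp [mul_comm]

lemma mul_def (a b : Heis) : a * b = ⟨a.x + b.x, a.y + b.y, a.z + b.z + a.x * b.y⟩ := rfl
lemma one_def : (1 : Heis) = ⟨0, 0, 0⟩ := rfl
lemma inv_def (a : Heis) : a⁻¹ = ⟨-a.x, -a.y, -a.z + a.x * a.y⟩ := rfl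

/-- The central embedding `ℤ → Heis`. -/
def central : Multiplicative ℤ →* Heis where
  toFun n := ⟨0, 0, n.toAdd⟩
  map_one' := rfl
  map_mul' a b := by ext <;> simp

lemma central_injective : Function.Injective central := by
  intro a b h
  have : (central a).z = (central b).z := by rw [h]
  simpa [central] using this

end Heis

/-- In a commutative free group every element is a power of a fixed element. -/
lemma free_comm_cyclic (G : Type*) [Group G] [IsFreeGroup G]
    (hcomm : ∀ g h : G, g * h = h * g) :
    ∃ z : G, ∀ g : G, g ∈ Subgroup.zpowers z := by
  classical
  set J := IsFreeGroup.Generators G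
  let e : G ≃* FreeGroup J := IsFreeGroup.toFreeGroup G
  have hJ : Subsingleton J := by
    constructor
    intro i j
    by_contra hij
    let f : J → FreeGroup Bool := fun k =>
      if k = i then FreeGroup.of true else if k = j then FreeGroup.of false else 1
    have hcomm' : (FreeGroup.of i : FreeGroup J) * FreeGroup.of j
        = FreeGroup.of j * FreeGroup.of i := by
      have := hcomm (e.symm (FreeGroup.of i)) (e.symm (FreeGroup.of j))
      have := congrArg e this
      simpa using this
    have := congrArg (FreeGroup.lift f) hcomm'
    simp only [map_mul, FreeGroup.lift_apply_of, f, if_pos, Ne.symm hij, if_neg, if_true,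
      reduceIte, hij] at this
    revert this
    decide
  rcases isEmpty_or_nonempty J with hE | hN
  · refine ⟨1, fun g => ?_⟩
    have htop : Subgroup.closure (Set.range (FreeGroup.of : J → FreeGroup J)) = ⊤ :=
      FreeGroup.closure_range_of J
    have : e g ∈ Subgroup.closure (Set.range (FreeGroup.of : J → FreeGroup J)) := by
      rw [htop]; trivial
    have hr : Set.range (FreeGroup.of : J → FreeGroup J) = ∅ := Set.range_eq_empty _
    rw [hr, Subgroup.closure_empty] at htop
    have h1 : e g ∈ (⊥ : Subgroup (FreeGroup J)) := by rw [htop]; trivial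
    have : e g = 1 := Subgroup.mem_bot.mp h1
    have : g = 1 := by
      apply e.injective; simpa using this
    exact ⟨0, by simp [this]⟩
  · obtain ⟨j0⟩ := hN
    refine ⟨e.symm (FreeGroup.of j0), fun g => ?_⟩
    have htop : Subgroup.closure (Set.range (FreeGroup.of : J → FreeGroup J)) = ⊤ :=
      FreeGroup.closure_range_of J
    have hsub : Set.range (FreeGroup.of : J → FreeGroup J)
        ⊆ (Subgroup.zpowers (FreeGroup.of j0) : Subgroup (FreeGroup J)) := by
      rintro _ ⟨j, rfl⟩
      have : j = j0 := Subsingleton.elim j j0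
      rw [this]
      exact Subgroup.mem_zpowers _
    have : e g ∈ Subgroup.zpowers (FreeGroup.of j0) := by
      have := (Subgroup.closure_le _).mpr hsub
      rw [htop] at this
      exact this trivial
    obtain ⟨n, hn⟩ := this
    refine ⟨n, ?_⟩
    apply e.injective
    rw [map_zpow]
    simpa using hn


open scoped commutatorElement

/-- The relators `[a,[b⁻¹,c]]` and `[b,[c⁻¹,a]]` of the Borromean rings group, where
`a = FreeGroup.of 0`, `b = FreeGroup.of 1`, `c = FreeGroup.of 2` and `⁅x, y⁆ = xyx⁻¹y⁻¹`. -/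
def borromeanRels : Set (FreeGroup (Fin 3)) :=
  {⁅FreeGroup.of (0 : Fin 3), ⁅(FreeGroup.of (1 : Fin 3))⁻¹, FreeGroup.of (2 : Fin 3)⁆⁆,
   ⁅FreeGroup.of (1 : Fin 3), ⁅(FreeGroup.of (2 : Fin 3))⁻¹, FreeGroup.of (0 : Fin 3)⁆⁆}

/-- The fundamental group of the Borromean rings link complement,
`G = ⟨a, b, c ∣ [a,[b⁻¹,c]], [b,[c⁻¹,a]]⟩`. -/
abbrev BorromeanGroup : Type := PresentedGroup borromeanRels

/-- Let `p : G → F(α, β)` be the homomorphism with `p(a) = α`, `p(b) = β`, `p(c) = 1`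
(where `α = FreeGroup.of true`, `β = FreeGroup.of false`). Then `B = p⁻¹(⟨β⟩)` is not a
free group: it is not isomorphic to the free group on any type. -/

theorem stmt_9 (p : BorromeanGroup →* FreeGroup Bool)
    (hpa : p (PresentedGroup.of 0) = FreeGroup.of true)
    (hpb : p (PresentedGroup.of 1) = FreeGroup.of false)
    (hpc : p (PresentedGroup.of 2) = 1) :
    ¬ ∃ ι : Type,
      Nonempty (↥(Subgroup.comap p (Subgroup.zpowers (FreeGroup.of false))) ≃* FreeGroup ι) := by
  rintro ⟨ι, ⟨e⟩⟩
  set B := Subgroup.comap p (Subgroup.zpowers (FreeGroup.of false)) with hBdef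
  -- the elements b and t = [c⁻¹, a] of the Borromean group
  set b : BorromeanGroup := PresentedGroup.of 1 with hbdef
  set t : BorromeanGroup := ⁅(PresentedGroup.of 2 : BorromeanGroup)⁻¹, PresentedGroup.of 0⁆
    with htdef
  -- b and t commute, thanks to the second relator
  have hrel : b * t = t * b := by
    have hm : ⁅FreeGroup.of (1 : Fin 3), ⁅(FreeGroup.of (2 : Fin 3))⁻¹,
        FreeGroup.of (0 : Fin 3)⁆⁆ ∈ borromeanRels := by
      simp [borromeanRels]
    have h1 : PresentedGroup.mk borromeanRels
        ⁅FreeGroup.of (1 : Fin 3), ⁅(FreeGroup.of (2 : Fin 3))⁻¹, FreeGroup.of (0 : Fin 3)⁆⁆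
        = 1 :=
      (QuotientGroup.eq_one_iff _).mpr (Subgroup.subset_normalClosure hm)
    rw [map_commutatorElement, map_commutatorElement, map_inv] at h1
    exact commutatorElement_eq_one_iff_mul_comm.mp h1
  -- the auxiliary homomorphism q to the Heisenberg group, killing b
  have hf : ∀ r ∈ borromeanRels,
      FreeGroup.lift (fun i : Fin 3 => if i = 0 then (⟨1,0,0⟩ : Heis)
        else if i = 2 then (⟨0,1,0⟩ : Heis) else 1) r = 1 := by
    intro r hr
    rcases hr with hr | hr <;> rw [hr] <;>
      simp [map_commutatorElement, commutatorElement_one_left, commutatorElement_one_right]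
  set q : BorromeanGroup →* Heis := PresentedGroup.toGroup hf with hqdef
  have hqb : q b = 1 := by
    rw [hbdef, PresentedGroup.toGroup.of, if_neg (by decide : ¬(1 : Fin 3) = 0),
      if_neg (by decide : ¬(1 : Fin 3) = 2)]
  have hqt : q t = Heis.central (Multiplicative.ofAdd 1) := by
    rw [htdef, map_commutatorElement, map_inv, PresentedGroup.toGroup.of,
      PresentedGroup.toGroup.of]
    rw [if_neg (by decide : ¬(2 : Fin 3) = 0), if_pos rfl, if_pos rfl]
    ext <;> simp [commutatorElement_def, Heis.central]
  -- b and t lie in B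
  have hbB : b ∈ B := by
    rw [hBdef, Subgroup.mem_comap, hbdef, hpb]
    exact Subgroup.mem_zpowers _
  have htB : t ∈ B := by
    rw [hBdef, Subgroup.mem_comap, htdef, map_commutatorElement, map_inv, hpc, hpa]
    simp only [inv_one, commutatorElement_one_left]
    exact one_mem _
  set b' : B := ⟨b, hbB⟩ with hb'def
  set t' : B := ⟨t, htB⟩ with ht'def
  have hcomm' : b' * t' = t' * b' := Subtype.ext hrel
  -- the subgroup of FreeGroup ι generated by the images of b and t
  set S : Set (FreeGroup ι) := {e b', e t'} with hSdef
  have hScomm : ∀ u ∈ S, ∀ v ∈ S, u * v = v * u := by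
    rintro u (rfl | rfl) v (rfl | rfl) <;>
      simp only [← map_mul, hcomm']
  set H : Subgroup (FreeGroup ι) := Subgroup.closure S with hHdef
  have hcommH : ∀ g h : H, g * h = h * g := fun g h => by
    letI := Subgroup.closureCommGroupOfComm hScomm
    exact mul_comm g h
  obtain ⟨z, hz⟩ := free_comm_cyclic H hcommH
  have hxH : e b' ∈ H := Subgroup.subset_closure (Set.mem_insert _ _)
  have hyH : e t' ∈ H := Subgroup.subset_closure (Set.mem_insert_of_mem _ rfl)
  obtain ⟨m, hm⟩ := hz ⟨e b', hxH⟩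
  obtain ⟨n, hn⟩ := hz ⟨e t', hyH⟩
  have hm' : (z : FreeGroup ι) ^ m = e b' := congrArg Subtype.val hm
  have hn' : (z : FreeGroup ι) ^ n = e t' := congrArg Subtype.val hn
  set u : B := e.symm (z : FreeGroup ι) with hudef
  have hbu : b' = u ^ m := by
    apply e.injective
    rw [map_zpow, hudef, MulEquiv.apply_symm_apply, hm']
  have htu : t' = u ^ n := by
    apply e.injective
    rw [map_zpow, hudef, MulEquiv.apply_symm_apply, hn']
  -- pass to G and apply q
  have hbG : b = (u : BorromeanGroup) ^ m := by
    have := congrArg Subtype.val hbu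
    simpa using this
  have htG : t = (u : BorromeanGroup) ^ n := by
    have := congrArg Subtype.val htu
    simpa using this
  set w : Heis := q (u : BorromeanGroup) with hwdef
  have hw1 : w ^ m = 1 := by rw [hwdef, ← map_zpow, ← hbG, hqb]
  have hw2 : w ^ n = Heis.central (Multiplicative.ofAdd 1) := by
    rw [hwdef, ← map_zpow, ← htG, hqt]
  have hmn : Heis.central (Multiplicative.ofAdd (m : ℤ)) = 1 := by
    have : (w ^ m) ^ n = (w ^ n) ^ m := by rw [← zpow_mul, ← zpow_mul, mul_comm]
    rw [hw1, hw2, one_zpow, ← map_zpow] at this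
    rw [this]
    congr 1
    rw [← ofAdd_zsmul, smul_eq_mul, mul_one]
  have hm0 : m = 0 := by
    have := Heis.central_injective (hmn.trans (map_one Heis.central).symm)
    simpa using this
  -- conclude
  rw [hm0, zpow_zero] at hbu
  have hb1 : b = 1 := congrArg Subtype.val hbu
  have : p b = 1 := by rw [hb1, map_one]
  rw [hbdef, hpb] at this
  revert this
  decide
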